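/- If integers a ≥ 0, b, c satisfy Σ_{i=0}^{a} ν₂(m+i) = ν₂(m+b) + c for all integers m ≥ 1 (with m+b ≥ 1 whenever required), then a = 0, b = 0, and c = 0. -/

import Mathlib

open Finset

lemma le_val_iff {k : ℤ} (hk : k ≠ 0) (n : ℕ) : n ≤ padicValInt 2 k ↔ (2:ℤ)^n ∣ k := by
  have := padicValInt_dvd_iff (p := 2) n k
  push_cast at this
  rw [this]
  simp [hk]

lemma val_dvd (k : ℤ) : (2:ℤ)^(padicValInt 2 k) ∣ k := by
  have := padicValInt_dvd (p := 2) k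
  push_cast at this
  exact this

lemma val_lt {k : ℤ} (hk : k ≠ 0) {N : ℕ} (hN : k.natAbs < 2^N) : padicValInt 2 k < N := by
  by_contra hle
  push_neg at hle
  have h1 : (2:ℤ)^N ∣ k := (le_val_iff hk N).mp hle
  have h2 : (2^N : ℕ) ∣ k.natAbs := by
    have := Int.natAbs_dvd_natAbs.mpr h1
    simpa [Int.natAbs_pow] using this
  have := Nat.le_of_dvd (Int.natAbs_pos.mpr hk) h2
  omega

lemma key {N : ℕ} {k : ℤ} (hk : k ≠ 0) (hlt : padicValInt 2 k < N) :
    padicValInt 2 (2^N + k) = padicValInt 2 k := by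
  set v := padicValInt 2 k with hv
  have hne : (2:ℤ)^N + k ≠ 0 := by
    intro h0
    have hdvd : (2:ℤ)^N ∣ k := ⟨-1, by linarith⟩
    have := (le_val_iff hk N).mpr hdvd
    omega
  have h1 : (2:ℤ)^v ∣ 2^N + k := dvd_add (pow_dvd_pow 2 hlt.le) (val_dvd k)
  have h2 : ¬ (2:ℤ)^(v+1) ∣ 2^N + k := by
    intro hd
    have hN : (2:ℤ)^(v+1) ∣ 2^N := pow_dvd_pow 2 (by omega)
    have : (2:ℤ)^(v+1) ∣ k := by
      have := dvd_sub hd hN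
      simpa using this
    have := (le_val_iff hk (v+1)).mpr this
    omega
  have hle1 : v ≤ padicValInt 2 (2^N + k) := (le_val_iff hne v).mpr h1
  have hle2 : ¬ (v + 1 ≤ padicValInt 2 (2^N + k)) := fun h => h2 ((le_val_iff hne (v+1)).mp h)
  omega

lemma val_pow (N : ℕ) : padicValInt 2 ((2:ℤ)^N) = N := by
  rw [show ((2:ℤ)^N) = ((2^N : ℕ) : ℤ) by push_cast; ring, padicValInt.of_nat,
    padicValNat.prime_pow]

lemma split (a j : ℕ) (hj : j ∈ Finset.range (a+1)) (N : ℕ) (hN : a + j < 2^N) :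
    (∑ i ∈ Finset.range (a + 1), (padicValInt 2 ((2:ℤ)^N + ((i:ℤ) - j)) : ℤ)) =
      N + ∑ i ∈ (Finset.range (a+1)).erase j, (padicValInt 2 ((i:ℤ) - j) : ℤ) := by
  rw [← Finset.sum_erase_add _ _ hj]
  have hterm : ((2:ℤ)^N + ((j:ℤ) - j)) = 2^N := by ring
  rw [hterm, val_pow]
  rw [Finset.sum_congr rfl (fun i hi => ?_)]
  · ring
  · simp only [Finset.mem_erase, Finset.mem_range] at hi
    have hne : (i:ℤ) - j ≠ 0 := by
      intro h0; apply hi.1; omega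
    have habs : ((i:ℤ) - j).natAbs < 2^N := by
      have : i < a + 1 := hi.2
      omega
    rw [key hne (val_lt hne habs)]

lemma nosplit (a : ℕ) (d : ℤ) (hd : ∀ i ∈ Finset.range (a+1), (i:ℤ) + d ≠ 0) (N : ℕ)
    (hN : (a:ℤ) + |d| < 2^N) :
    (∑ i ∈ Finset.range (a + 1), (padicValInt 2 ((2:ℤ)^N + ((i:ℤ) + d)) : ℤ)) =
      ∑ i ∈ Finset.range (a+1), (padicValInt 2 ((i:ℤ) + d) : ℤ) := by
  refine Finset.sum_congr rfl (fun i hi => ?_)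
  have hne := hd i hi
  simp only [Finset.mem_range] at hi
  have habs : ((i:ℤ) + d).natAbs < 2^N := by
    have h1 : |(i:ℤ) + d| ≤ (i:ℤ) + |d| := by
      calc |(i:ℤ)+d| ≤ |(i:ℤ)| + |d| := abs_add_le _ _
        _ = (i:ℤ) + |d| := by rw [abs_of_nonneg (by positivity)]
    have h2 : ((((i:ℤ)+d).natAbs : ℤ)) = |(i:ℤ)+d| := (Int.abs_eq_natAbs _).symm
    have h3 : ((2^N : ℕ) : ℤ) = (2:ℤ)^N := by push_cast; ring
    have h4 : (i:ℤ) ≤ a := by exact_mod_cast Nat.lt_succ_iff.mp hi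
    have h5 : (((i:ℤ)+d).natAbs : ℤ) < ((2^N:ℕ):ℤ) := by rw [h2, h3]; linarith
    exact_mod_cast h5
  rw [key hne (val_lt hne habs)]

lemma two_pow_big (M : ℕ) {N : ℕ} (hN : M ≤ N) : (M:ℤ) < 2^N := by
  have h1 : M < 2^M := (Nat.lt_two_pow_self (n := M))
  have h2 : (2:ℕ)^M ≤ 2^N := Nat.pow_le_pow_right (by norm_num) hN
  have : (M:ℤ) < ((2^N : ℕ):ℤ) := by exact_mod_cast lt_of_lt_of_le h1 h2
  simpa [Int.natCast_pow] using this

theorem rigidity (a : ℕ) (b c : ℤ)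
    (h : ∀ m : ℤ, 1 ≤ m → 1 ≤ m + b →
      (∑ i ∈ Finset.range (a + 1), (padicValInt 2 (m + i) : ℤ)) = padicValInt 2 (m + b) + c) :
    a = 0 ∧ b = 0 ∧ c = 0 := by
  have hbrange : 0 ≤ b ∧ b ≤ (a:ℤ) := by
    by_contra hbad
    have hd : ∀ i ∈ Finset.range (a+1), (i:ℤ) + (-b) ≠ 0 := by
      intro i hi h0
      simp only [Finset.mem_range] at hi
      exact hbad ⟨by omega, by omega⟩
    set M := a + b.natAbs + 1 with hM
    have hbound : ∀ N, M ≤ N → (a:ℤ) + |(-b)| < 2^N := by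
      intro N hN
      have := two_pow_big M hN
      have habs : |(-b)| = (b.natAbs : ℤ) := by
        rw [abs_neg, Int.abs_eq_natAbs]
      rw [habs]
      push_cast at this ⊢
      linarith
    have heq : ∀ N : ℕ, M ≤ N →
        (∑ i ∈ Finset.range (a+1), (padicValInt 2 ((i:ℤ) + (-b)) : ℤ)) = (N:ℤ) + c := by
      intro N hN
      have hb' := hbound N hN
      have habsb : b ≤ |(-b)| := by rw [abs_neg]; exact le_abs_self b
      have hm : (1:ℤ) ≤ 2^N - b := by
        have ha0 : (0:ℤ) ≤ a := Int.natCast_nonneg a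
        have habs0 : (0:ℤ) ≤ |(-b)| := abs_nonneg _
        linarith
      have hmb : (1:ℤ) ≤ (2^N - b) + b := by
        have : (0:ℤ) < 2^N := by positivity
        linarith
      have hh := h (2^N - b) hm hmb
      have hrw : (∑ i ∈ Finset.range (a+1), (padicValInt 2 ((2:ℤ)^N - b + i) : ℤ)) =
          ∑ i ∈ Finset.range (a+1), (padicValInt 2 ((2:ℤ)^N + ((i:ℤ) + (-b))) : ℤ) :=
        Finset.sum_congr rfl (fun i _ => by ring_nf)
      rw [hrw, nosplit a (-b) hd N hb'] at hh
      rw [show (2:ℤ)^N - b + b = 2^N by ring, val_pow] at hh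
      exact hh
    have e1 := heq M le_rfl
    have e2 := heq (M+1) (by omega)
    rw [e1] at e2
    push_cast at e2
    omega
  have hb0 : b = 0 := by
    by_contra hbne
    have hb1 : 1 ≤ b := by omega
    set j := (b-1).toNat with hjdef
    have hj' : (j:ℤ) = b - 1 := by omega
    have hjmem : j ∈ Finset.range (a+1) := by
      simp only [Finset.mem_range]; omega
    set M := a + j + 1 with hM
    have heq : ∀ N : ℕ, M ≤ N →
        (N:ℤ) + ∑ i ∈ (Finset.range (a+1)).erase j, (padicValInt 2 ((i:ℤ) - j) : ℤ) = c := by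
      intro N hN
      have hbig := two_pow_big M hN
      have hbig' : a + j < 2^N := by
        have h1 : M < 2^M := (Nat.lt_two_pow_self (n := M))
        have h2 : (2:ℕ)^M ≤ 2^N := Nat.pow_le_pow_right (by norm_num) hN
        omega
      have hN1 : 1 ≤ N := le_trans (by omega) hN
      have hm : (1:ℤ) ≤ 2^N + 1 - b := by
        have : ((j:ℤ)) < 2^N := by push_cast at hbig ⊢; omega
        omega
      have hmb : (1:ℤ) ≤ (2^N + 1 - b) + b := by
        have : (0:ℤ) < 2^N := by positivity
        linarith
      have hh := h (2^N + 1 - b) hm hmb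
      have hrw : (∑ i ∈ Finset.range (a+1), (padicValInt 2 ((2:ℤ)^N + 1 - b + i) : ℤ)) =
          ∑ i ∈ Finset.range (a+1), (padicValInt 2 ((2:ℤ)^N + ((i:ℤ) - j)) : ℤ) :=
        Finset.sum_congr rfl (fun i _ => by rw [show (2:ℤ)^N + 1 - b + i = 2^N + ((i:ℤ) - j) by
          rw [hj']; ring])
      rw [hrw, split a j hjmem N hbig'] at hh
      rw [show (2:ℤ)^N + 1 - b + b = 2^N + 1 by ring] at hh
      have hval1 : padicValInt 2 ((2:ℤ)^N + 1) = 0 := by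
        rw [key (by norm_num) (by rw [padicValInt.one]; omega), padicValInt.one]
      rw [hval1] at hh
      push_cast at hh ⊢
      omega
    have e1 := heq M le_rfl
    have e2 := heq (M+1) (by omega)
    rw [← e1] at e2
    push_cast at e2
    omega
  have ha0 : a = 0 := by
    by_contra hane
    have ha1 : 1 ≤ a := by omega
    have hjmem : 1 ∈ Finset.range (a+1) := by simp only [Finset.mem_range]; omega
    set M := a + 2 with hM
    have heq : ∀ N : ℕ, M ≤ N →
        (N:ℤ) + ∑ i ∈ (Finset.range (a+1)).erase 1, (padicValInt 2 ((i:ℤ) - (1:ℕ)) : ℤ) = c := by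
      intro N hN
      have hbig := two_pow_big M hN
      have hbig' : a + 1 < 2^N := by
        have h1 : M < 2^M := (Nat.lt_two_pow_self (n := M))
        have h2 : (2:ℕ)^M ≤ 2^N := Nat.pow_le_pow_right (by norm_num) hN
        omega
      have hN1 : 1 ≤ N := le_trans (by omega) hN
      have hm : (1:ℤ) ≤ 2^N - 1 := by push_cast at hbig; omega
      have hmb : (1:ℤ) ≤ (2^N - 1) + b := by rw [hb0]; omega
      have hh := h (2^N - 1) hm hmb
      have hrw : (∑ i ∈ Finset.range (a+1), (padicValInt 2 ((2:ℤ)^N - 1 + i) : ℤ)) =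
          ∑ i ∈ Finset.range (a+1), (padicValInt 2 ((2:ℤ)^N + ((i:ℤ) - (1:ℕ))) : ℤ) :=
        Finset.sum_congr rfl (fun i _ => by push_cast; ring_nf)
      rw [hrw, split a 1 hjmem N hbig'] at hh
      have hvalm1 : padicValInt 2 ((2:ℤ)^N - 1) = 0 := by
        have hm1 : padicValInt 2 (-1 : ℤ) = 0 := by simp [padicValInt]
        rw [show (2:ℤ)^N - 1 = 2^N + (-1) by ring, key (by norm_num) (by rw [hm1]; omega), hm1]
      rw [hb0, add_zero, hvalm1] at hh
      push_cast at hh ⊢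
      omega
    have e1 := heq M le_rfl
    have e2 := heq (M+1) (by omega)
    rw [← e1] at e2
    push_cast at e2
    omega
  refine ⟨ha0, hb0, ?_⟩
  have hh := h 1 (by norm_num) (by rw [hb0]; norm_num)
  rw [ha0, hb0] at hh
  simp [padicValInt.one] at hh
  omega
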